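/- There exists a constant d̄ > 0, depending only on a₁, a₂, b₁, b₂, c₁, c₂, γ, δ, such that for every d > d̄, every solution (w, τ) of the one-dimensional limiting system with diffusion coefficient d has w constant on [0,1]; that is, the system admits no nonconstant solution when d > d̄. -/

import Mathlib

set_option maxHeartbeats 2000000

open Set

/-- The nonlinearity `h(u,τ) = u(a₁ − b₁u) − c₁τ − (γτ/u)(a₂ − b₂u − c₂τ/u)`. -/
noncomputable def hfun (a₁ a₂ b₁ b₂ c₁ c₂ γ : ℝ) (u τ : ℝ) : ℝ :=
  u * (a₁ - b₁ * u) - c₁ * τ - (γ * τ / u) * (a₂ - b₂ * u - c₂ * τ / u)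

/-- The change of variables `U(w,τ) = (√(w² + 4γδτ) + w)/(2δ)`. -/
noncomputable def Ufun (γ δ : ℝ) (w τ : ℝ) : ℝ :=
  (Real.sqrt (w ^ 2 + 4 * γ * δ * τ) + w) / (2 * δ)

lemma sq_le_lin' {x a b : ℝ} (hx : 0 ≤ x) (ha : 0 ≤ a) (hb : 0 ≤ b)
    (h : x^2 ≤ a*x + b) : x ≤ a + Real.sqrt b := by
  by_contra hc
  push_neg at hc
  have hs : Real.sqrt b ^ 2 = b := Real.sq_sqrt hb
  nlinarith [Real.sqrt_nonneg b]

lemma Ufun_pos {γ δ w τ : ℝ} (hγ : 0 < γ) (hδ : 0 < δ) (hτ : 0 < τ) :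
    0 < Ufun γ δ w τ := by
  unfold Ufun
  have hp : (0:ℝ) < 4 * γ * δ * τ := by positivity
  have h1 : |w| < Real.sqrt (w ^ 2 + 4 * γ * δ * τ) := by
    rw [← Real.sqrt_sq_eq_abs]
    exact Real.sqrt_lt_sqrt (sq_nonneg w) (by linarith)
  have h2 := neg_abs_le w
  have : 0 < Real.sqrt (w ^ 2 + 4 * γ * δ * τ) + w := by linarith
  positivity

/-- The key algebraic identity: `δ u² = w u + γ τ` for `u = Ufun γ δ w τ`. -/
lemma Ufun_id {γ δ w τ : ℝ} (hγ : 0 < γ) (hδ : 0 < δ) (hτ : 0 < τ) :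
    δ * (Ufun γ δ w τ)^2 = w * Ufun γ δ w τ + γ * τ := by
  have hp : (0:ℝ) < 4 * γ * δ * τ := by positivity
  have hD : (0:ℝ) ≤ w ^ 2 + 4 * γ * δ * τ := by nlinarith [sq_nonneg w]
  have hs : Real.sqrt (w ^ 2 + 4 * γ * δ * τ) ^ 2 = w ^ 2 + 4 * γ * δ * τ :=
    Real.sq_sqrt hD
  unfold Ufun
  have hδ' : (2*δ) ≠ 0 := by positivity
  field_simp
  have hs2 : Real.sqrt (w ^ 2 + δ * 4 * γ * τ) ^ 2 = w ^ 2 + 4 * γ * δ * τ := by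
    rw [show δ * 4 * γ * τ = 4 * γ * δ * τ by ring]; exact hs
  linear_combination hs2

/-- Monotonicity of `u` with respect to `w`, expressed via the identity. -/
lemma u_mono {γ δ τ u₁ u₂ w₁ w₂ : ℝ} (hγ : 0 < γ) (hδ : 0 < δ) (hτ : 0 < τ)
    (hu₁ : 0 < u₁) (hu₂ : 0 < u₂)
    (h₁ : δ * u₁^2 = w₁ * u₁ + γ * τ) (h₂ : δ * u₂^2 = w₂ * u₂ + γ * τ)
    (hw : w₁ ≤ w₂) : u₁ ≤ u₂ := by
  by_contra hc
  push_neg at hc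
  have key : (w₁ - w₂) * (u₁ * u₂) = (u₁ - u₂) * (δ * u₁ * u₂ + γ * τ) := by
    have e₁' : w₁ = (δ * u₁^2 - γ * τ) / u₁ := by field_simp; linarith
    have e₂' : w₂ = (δ * u₂^2 - γ * τ) / u₂ := by field_simp; linarith
    rw [e₁', e₂']
    field_simp
    ring
  nlinarith [mul_pos hu₁ hu₂, mul_pos (mul_pos hδ hu₁) hu₂, mul_pos hγ hτ]

lemma hfun_mul_sq (a₁ a₂ b₁ b₂ c₁ c₂ γ u τ : ℝ) (hu : u ≠ 0) :
    hfun a₁ a₂ b₁ b₂ c₁ c₂ γ u τ * u^2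
      = a₁*u^3 - b₁*u^4 - c₁*τ*u^2 - γ*τ*a₂*u + γ*τ*b₂*u^2 + γ*c₂*τ^2 := by
  unfold hfun
  field_simp
  ring

/-- Bound on `u` at a maximum point: if `h(u,τ) ≥ 0` then `u ≤ K`. -/
lemma umax_bound (a₁ a₂ b₁ b₂ c₁ c₂ γ T u τ : ℝ)
    (ha₁ : 0 < a₁) (ha₂ : 0 < a₂) (hb₁ : 0 < b₁) (hb₂ : 0 < b₂) (hc₁ : 0 < c₁)
    (hc₂ : 0 < c₂) (hγ : 0 < γ) (hτ : 0 < τ) (hu : 0 < u)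
    (hT : τ ≤ T) (hTpos : 0 < T)
    (h : 0 ≤ hfun a₁ a₂ b₁ b₂ c₁ c₂ γ u τ) :
    u ≤ 1 + a₁/b₁ + Real.sqrt ((γ*T*b₂ + γ*c₂*T^2)/b₁) := by
  rcases le_or_gt u 1 with h1 | h1
  · have h2 : 0 ≤ a₁/b₁ := by positivity
    have h3 : 0 ≤ Real.sqrt ((γ*T*b₂ + γ*c₂*T^2)/b₁) := Real.sqrt_nonneg _
    linarith
  · have hpoly : 0 ≤ a₁*u^3 - b₁*u^4 - c₁*τ*u^2 - γ*τ*a₂*u + γ*τ*b₂*u^2 + γ*c₂*τ^2 := by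
      have h2 : 0 ≤ hfun a₁ a₂ b₁ b₂ c₁ c₂ γ u τ * u^2 := mul_nonneg h (by positivity)
      rw [hfun_mul_sq _ _ _ _ _ _ _ _ _ hu.ne'] at h2
      exact h2
    have p1 : 0 ≤ c₁*τ*u^2 := by positivity
    have p2 : 0 ≤ γ*τ*a₂*u := by positivity
    have h4 : b₁*u^4 ≤ a₁*u^3 + γ*τ*b₂*u^2 + γ*c₂*τ^2 := by linarith
    have q1 : γ*τ*b₂*u^2 ≤ γ*T*b₂*u^2 := by gcongr
    have q2 : γ*c₂*τ^2 ≤ γ*c₂*T^2 := by gcongr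
    have hu2 : (1:ℝ) ≤ u^2 := by nlinarith
    have q3 : γ*c₂*T^2 ≤ γ*c₂*T^2*u^2 := by
      nlinarith [mul_le_mul_of_nonneg_left hu2 (show (0:ℝ) ≤ γ*c₂*T^2 by positivity)]
    have h5 : b₁*u^4 ≤ (a₁*u + γ*T*b₂ + γ*c₂*T^2)*u^2 := by nlinarith
    have h6 : b₁*u^2 ≤ a₁*u + γ*T*b₂ + γ*c₂*T^2 := by
      by_contra hcon
      push_neg at hcon
      have := mul_lt_mul_of_pos_right hcon (mul_pos hu hu)
      nlinarith
    have h7 : u^2 ≤ (a₁/b₁)*u + (γ*T*b₂ + γ*c₂*T^2)/b₁ := by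
      rw [div_mul_eq_mul_div, ← add_div, le_div_iff₀ hb₁]
      linarith
    have := sq_le_lin' hu.le (by positivity) (by positivity) h7
    linarith

/-- Bound on `τ/u` at a minimum point: if `h(u,τ) ≤ 0` then `τ ≤ V u`. -/
lemma vmax_bound (a₁ a₂ b₁ b₂ c₁ c₂ γ T K u τ : ℝ)
    (ha₁ : 0 < a₁) (ha₂ : 0 < a₂) (hb₁ : 0 < b₁) (hb₂ : 0 < b₂) (hc₁ : 0 < c₁)
    (hc₂ : 0 < c₂) (hγ : 0 < γ) (hτ : 0 < τ) (hu : 0 < u)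
    (hT : τ ≤ T) (hTpos : 0 < T) (hK : u ≤ K) (hKpos : 0 < K)
    (h : hfun a₁ a₂ b₁ b₂ c₁ c₂ γ u τ ≤ 0) :
    τ ≤ (a₂/c₂ + Real.sqrt ((b₁*K^2 + c₁*T)/(γ*c₂))) * u := by
  set v := τ/u with hv
  have hvpos : 0 < v := by positivity
  have hτv : τ = v*u := by rw [hv]; field_simp
  have hpoly : a₁*u^3 - b₁*u^4 - c₁*τ*u^2 - γ*τ*a₂*u + γ*τ*b₂*u^2 + γ*c₂*τ^2 ≤ 0 := by
    have h2 : hfun a₁ a₂ b₁ b₂ c₁ c₂ γ u τ * u^2 ≤ 0 :=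
      mul_nonpos_of_nonpos_of_nonneg h (by positivity)
    rw [hfun_mul_sq _ _ _ _ _ _ _ _ _ hu.ne'] at h2
    exact h2
  rw [hτv] at hpoly
  have p1 : 0 ≤ a₁*u^3 := by positivity
  have p2 : 0 ≤ γ*(v*u)*b₂*u^2 := by positivity
  have key : γ*c₂*v^2 ≤ b₁*u^2 + c₁*(v*u) + γ*a₂*v := by
    by_contra hcon
    push_neg at hcon
    have := mul_lt_mul_of_pos_right hcon (mul_pos hu hu)
    nlinarith
  have key2 : γ*c₂*v^2 ≤ (b₁*K^2 + c₁*T) + γ*a₂*v := by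
    have h8 : c₁*(v*u) ≤ c₁*T := by rw [← hτv]; gcongr
    have h8' : b₁*u^2 ≤ b₁*K^2 := by gcongr
    linarith
  have h9 : v^2 ≤ (a₂/c₂)*v + (b₁*K^2 + c₁*T)/(γ*c₂) := by
    rw [← sub_nonneg]
    have e : (a₂/c₂)*v + (b₁*K^2 + c₁*T)/(γ*c₂) - v^2
        = (γ*a₂*v + (b₁*K^2 + c₁*T) - γ*c₂*v^2)/(γ*c₂) := by
      field_simp
    rw [e]
    apply div_nonneg (by linarith) (by positivity)
  have h10 := sq_le_lin' hvpos.le (by positivity) (by positivity) h9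
  calc τ = v * u := hτv
    _ ≤ (a₂/c₂ + Real.sqrt ((b₁*K^2 + c₁*T)/(γ*c₂))) * u :=
        mul_le_mul_of_nonneg_right h10 hu.le

/-- The Lipschitz estimate for `h ∘ U` in terms of `w`. -/
lemma hfun_lip (a₁ a₂ b₁ b₂ c₁ c₂ γ δ τ K V u₁ u₂ w₁ w₂ : ℝ)
    (ha₁ : 0 < a₁) (ha₂ : 0 < a₂) (hb₁ : 0 < b₁)
    (hc₂ : 0 < c₂) (hγ : 0 < γ) (hδ : 0 < δ) (hτ : 0 < τ)
    (hu₁ : 0 < u₁) (hu₂ : 0 < u₂) (hK₁ : u₁ ≤ K) (hK₂ : u₂ ≤ K)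
    (hV₁ : τ ≤ V * u₁) (hV₂ : τ ≤ V * u₂)
    (h₁ : δ * u₁^2 = w₁ * u₁ + γ * τ) (h₂ : δ * u₂^2 = w₂ * u₂ + γ * τ) :
    |hfun a₁ a₂ b₁ b₂ c₁ c₂ γ u₁ τ - hfun a₁ a₂ b₁ b₂ c₁ c₂ γ u₂ τ| ≤
      (a₁/δ + 2*b₁*K/δ + a₂ + 2*c₂*V) * |w₁ - w₂| := by
  have hu₁' := hu₁.ne'
  have hu₂' := hu₂.ne'
  set Q : ℝ := a₁ - b₁*(u₁+u₂) + a₂ * (γ*τ/(u₁*u₂))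
      - (c₂ * (τ/u₁ + τ/u₂)) * (γ*τ/(u₁*u₂)) with hQdef
  set P : ℝ := δ + γ*τ/(u₁*u₂) with hPdef
  have hgt : 0 < γ*τ/(u₁*u₂) := by positivity
  have hPδ : δ ≤ P := by rw [hPdef]; linarith
  have hPpos : 0 < P := lt_of_lt_of_le hδ hPδ
  have hQ : hfun a₁ a₂ b₁ b₂ c₁ c₂ γ u₁ τ - hfun a₁ a₂ b₁ b₂ c₁ c₂ γ u₂ τ
      = (u₁ - u₂) * Q := by
    unfold hfun
    rw [hQdef]
    field_simp
    ring
  have hP : w₁ - w₂ = (u₁ - u₂) * P := by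
    have e₁ : w₁ = δ * u₁ - γ * τ / u₁ := by
      field_simp
      linarith
    have e₂ : w₂ = δ * u₂ - γ * τ / u₂ := by
      field_simp
      linarith
    rw [e₁, e₂, hPdef]
    field_simp
    ring
  have hVpos : 0 < V := by
    have h0 : 0 < V * u₁ := lt_of_lt_of_le hτ hV₁
    by_contra h
    push_neg at h
    nlinarith
  have hKpos : 0 < K := lt_of_lt_of_le hu₁ hK₁
  have e3 : γ*τ/(u₁*u₂) ≤ P := by rw [hPdef]; linarith
  have tv₁ : τ/u₁ ≤ V := by rw [div_le_iff₀ hu₁]; linarith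
  have tv₂ : τ/u₂ ≤ V := by rw [div_le_iff₀ hu₂]; linarith
  have tvp₁ : 0 ≤ τ/u₁ := by positivity
  have tvp₂ : 0 ≤ τ/u₂ := by positivity
  set L : ℝ := a₁/δ + 2*b₁*K/δ + a₂ + 2*c₂*V with hLdef
  have hQb : |Q| ≤ L * P := by
    have t1 : a₁ ≤ (a₁/δ) * P := by
      have e : (a₁/δ) * δ = a₁ := by field_simp
      have := mul_le_mul_of_nonneg_left hPδ (by positivity : (0:ℝ) ≤ a₁/δ)
      linarith
    have t2 : b₁*(u₁+u₂) ≤ (2*b₁*K/δ) * P := by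
      have e : (2*b₁*K/δ) * δ = 2*b₁*K := by field_simp
      have h1 : b₁*(u₁+u₂) ≤ 2*b₁*K := by nlinarith
      have := mul_le_mul_of_nonneg_left hPδ (by positivity : (0:ℝ) ≤ 2*b₁*K/δ)
      linarith
    have t3 : a₂ * (γ*τ/(u₁*u₂)) ≤ a₂ * P := mul_le_mul_of_nonneg_left e3 ha₂.le
    have t3' : 0 ≤ a₂ * (γ*τ/(u₁*u₂)) := by positivity
    have t4 : (c₂ * (τ/u₁ + τ/u₂)) * (γ*τ/(u₁*u₂)) ≤ (2*c₂*V) * P := by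
      have h5 : c₂ * (τ/u₁ + τ/u₂) ≤ 2*c₂*V := by nlinarith
      have h6 : 0 ≤ c₂ * (τ/u₁ + τ/u₂) := by positivity
      exact mul_le_mul h5 e3 hgt.le (by positivity)
    have t4' : 0 ≤ (c₂ * (τ/u₁ + τ/u₂)) * (γ*τ/(u₁*u₂)) := by positivity
    have t2' : 0 ≤ b₁*(u₁+u₂) := by positivity
    have n1 : 0 ≤ (2*b₁*K/δ) * P := by positivity
    have n2 : 0 ≤ (2*c₂*V) * P := by positivity
    have n3 : 0 ≤ (a₁/δ) * P := by positivity
    have n4 : 0 ≤ a₂ * P := by positivity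
    rw [abs_le, hQdef, hLdef]
    constructor
    · nlinarith
    · nlinarith
  calc |hfun a₁ a₂ b₁ b₂ c₁ c₂ γ u₁ τ - hfun a₁ a₂ b₁ b₂ c₁ c₂ γ u₂ τ|
      = |u₁ - u₂| * |Q| := by rw [hQ, abs_mul]
    _ ≤ |u₁ - u₂| * (L * P) := mul_le_mul_of_nonneg_left hQb (abs_nonneg _)
    _ = L * (|u₁ - u₂| * P) := by ring
    _ = L * |w₁ - w₂| := by rw [hP, abs_mul, abs_of_pos hPpos]

/-- At a minimum point of `w` on `[0,1]` (with Neumann boundary conditions),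
the second derivative is nonnegative. -/
lemma min_snd_deriv {w w' w'' : ℝ → ℝ}
    (hw : ∀ x ∈ Icc (0:ℝ) 1, HasDerivWithinAt w (w' x) (Icc 0 1) x)
    (hw' : ∀ x ∈ Icc (0:ℝ) 1, HasDerivWithinAt w' (w'' x) (Icc 0 1) x)
    (hw'' : ContinuousOn w'' (Icc 0 1))
    (hb0 : w' 0 = 0) (hb1 : w' 1 = 0)
    {x₀ : ℝ} (hx₀ : x₀ ∈ Icc (0:ℝ) 1)
    (hmin : ∀ y ∈ Icc (0:ℝ) 1, w x₀ ≤ w y) :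
    0 ≤ w'' x₀ := by
  by_contra hneg
  push_neg at hneg
  have hwc : ContinuousOn w (Icc 0 1) := fun x hx => (hw x hx).continuousWithinAt
  have hw'c : ContinuousOn w' (Icc 0 1) := fun x hx => (hw' x hx).continuousWithinAt
  rcases lt_or_eq_of_le hx₀.2 with hlt | heq
  · -- x₀ < 1 : work on the right side
    have hd0 : w' x₀ = 0 := by
      rcases eq_or_lt_of_le hx₀.1 with h0 | h0
      · rw [← h0]; exact hb0
      · have hmem : Icc (0:ℝ) 1 ∈ nhds x₀ := Icc_mem_nhds h0 hlt
        have hda : HasDerivAt w (w' x₀) x₀ := (hw x₀ hx₀).hasDerivAt hmem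
        have : IsLocalMin w x₀ :=
          Filter.eventually_iff_exists_mem.2 ⟨Icc 0 1, hmem, fun y hy => hmin y hy⟩
        exact this.hasDerivAt_eq_zero hda
    have hcw : ContinuousWithinAt w'' (Icc 0 1) x₀ := hw'' x₀ hx₀
    have hev : ∀ᶠ y in nhdsWithin x₀ (Icc 0 1), w'' y < 0 :=
      hcw.eventually_lt continuousWithinAt_const hneg
    rcases Metric.mem_nhdsWithin_iff.1 hev with ⟨ε, hε, hball⟩
    set b : ℝ := min (x₀ + ε/2) 1 with hbdef
    have hx₀b : x₀ < b := lt_min (by linarith) hlt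
    have hb1' : b ≤ 1 := min_le_right _ _
    have hsub : Icc x₀ b ⊆ Icc (0:ℝ) 1 := Icc_subset_Icc hx₀.1 hb1'
    have hneg' : ∀ y ∈ Icc x₀ b, w'' y < 0 := by
      intro y hy
      refine hball ⟨?_, hsub hy⟩
      simp only [Metric.mem_ball, Real.dist_eq, abs_lt]
      constructor
      · have : x₀ ≤ y := hy.1
        linarith
      · have : y ≤ x₀ + ε/2 := le_trans hy.2 (min_le_left _ _)
        linarith
    have hanti : StrictAntiOn w' (Icc x₀ b) := by
      apply strictAntiOn_of_deriv_neg (convex_Icc _ _) (hw'c.mono hsub)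
      intro y hy
      rw [interior_Icc] at hy
      have hyI : y ∈ Icc (0:ℝ) 1 := hsub ⟨hy.1.le, hy.2.le⟩
      have hmem : Icc (0:ℝ) 1 ∈ nhds y :=
        Icc_mem_nhds (lt_of_le_of_lt hx₀.1 hy.1) (lt_of_lt_of_le hy.2 hb1')
      have hda : HasDerivAt w' (w'' y) y := (hw' y hyI).hasDerivAt hmem
      rw [hda.deriv]
      exact hneg' y ⟨hy.1.le, hy.2.le⟩
    have hanti2 : StrictAntiOn w (Icc x₀ b) := by
      apply strictAntiOn_of_deriv_neg (convex_Icc _ _) (hwc.mono hsub)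
      intro y hy
      rw [interior_Icc] at hy
      have hyI : y ∈ Icc (0:ℝ) 1 := hsub ⟨hy.1.le, hy.2.le⟩
      have hmem : Icc (0:ℝ) 1 ∈ nhds y :=
        Icc_mem_nhds (lt_of_le_of_lt hx₀.1 hy.1) (lt_of_lt_of_le hy.2 hb1')
      have hda : HasDerivAt w (w' y) y := (hw y hyI).hasDerivAt hmem
      rw [hda.deriv]
      have := hanti (left_mem_Icc.2 hx₀b.le) ⟨hy.1.le, hy.2.le⟩ hy.1
      rw [hd0] at this
      exact this
    have : w b < w x₀ :=
      hanti2 (left_mem_Icc.2 hx₀b.le) (right_mem_Icc.2 hx₀b.le) hx₀b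
    exact absurd (hmin b (hsub (right_mem_Icc.2 hx₀b.le))) (not_le.2 this)
  · -- x₀ = 1 : work on the left side
    subst heq
    have hcw : ContinuousWithinAt w'' (Icc 0 1) 1 := hw'' 1 hx₀
    have hev : ∀ᶠ y in nhdsWithin 1 (Icc 0 1), w'' y < 0 :=
      hcw.eventually_lt continuousWithinAt_const hneg
    rcases Metric.mem_nhdsWithin_iff.1 hev with ⟨ε, hε, hball⟩
    set b : ℝ := max (1 - ε/2) 0 with hbdef
    have hbx₀ : b < 1 := max_lt (by linarith) one_pos
    have hb0' : 0 ≤ b := le_max_right _ _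
    have hsub : Icc b 1 ⊆ Icc (0:ℝ) 1 := Icc_subset_Icc hb0' le_rfl
    have hneg' : ∀ y ∈ Icc b 1, w'' y < 0 := by
      intro y hy
      refine hball ⟨?_, hsub hy⟩
      simp only [Metric.mem_ball, Real.dist_eq, abs_lt]
      constructor
      · have h1 : 1 - ε/2 ≤ b := le_max_left _ _
        have : 1 - ε/2 ≤ y := le_trans h1 hy.1
        linarith
      · have : y ≤ 1 := hy.2
        linarith
    have hanti : StrictAntiOn w' (Icc b 1) := by
      apply strictAntiOn_of_deriv_neg (convex_Icc _ _) (hw'c.mono hsub)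
      intro y hy
      rw [interior_Icc] at hy
      have hyI : y ∈ Icc (0:ℝ) 1 := hsub ⟨hy.1.le, hy.2.le⟩
      have hmem : Icc (0:ℝ) 1 ∈ nhds y :=
        Icc_mem_nhds (lt_of_le_of_lt hb0' hy.1) hy.2
      have hda : HasDerivAt w' (w'' y) y := (hw' y hyI).hasDerivAt hmem
      rw [hda.deriv]
      exact hneg' y ⟨hy.1.le, hy.2.le⟩
    have hmono : StrictMonoOn w (Icc b 1) := by
      apply strictMonoOn_of_deriv_pos (convex_Icc _ _) (hwc.mono hsub)
      intro y hy
      rw [interior_Icc] at hy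
      have hyI : y ∈ Icc (0:ℝ) 1 := hsub ⟨hy.1.le, hy.2.le⟩
      have hmem : Icc (0:ℝ) 1 ∈ nhds y :=
        Icc_mem_nhds (lt_of_le_of_lt hb0' hy.1) hy.2
      have hda : HasDerivAt w (w' y) y := (hw y hyI).hasDerivAt hmem
      rw [hda.deriv]
      have := hanti ⟨hy.1.le, hy.2.le⟩ (right_mem_Icc.2 hbx₀.le) hy.2
      rw [hb1] at this
      linarith
    have : w b < w 1 :=
      hmono (left_mem_Icc.2 hbx₀.le) (right_mem_Icc.2 hbx₀.le) hbx₀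
    exact absurd (hmin b (hsub (left_mem_Icc.2 hbx₀.le))) (not_le.2 this)

/-- Nonexistence of nonconstant solutions for large diffusion (Lemma 4.3 /
Theorem 3.1): there is `d̄ > 0` depending only on the data such that for `d > d̄`
every solution `(w, τ)` of the one-dimensional limiting system has `w` constant. -/
theorem stmt_6 (a₁ a₂ b₁ b₂ c₁ c₂ γ δ : ℝ)
    (ha₁ : 0 < a₁) (ha₂ : 0 < a₂) (hb₁ : 0 < b₁) (hb₂ : 0 < b₂)
    (hc₁ : 0 < c₁) (hc₂ : 0 < c₂) (hγ : 0 < γ) (hδ : 0 < δ) :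
    ∃ dbar > 0, ∀ d : ℝ, dbar < d → ∀ (τ : ℝ) (w w' w'' : ℝ → ℝ), 0 < τ →
      (∀ x ∈ Icc (0:ℝ) 1, HasDerivWithinAt w (w' x) (Icc 0 1) x) →
      (∀ x ∈ Icc (0:ℝ) 1, HasDerivWithinAt w' (w'' x) (Icc 0 1) x) →
      ContinuousOn w'' (Icc 0 1) →
      (∀ x ∈ Icc (0:ℝ) 1,
        d * w'' x + hfun a₁ a₂ b₁ b₂ c₁ c₂ γ (Ufun γ δ (w x) τ) τ = 0) →
      w' 0 = 0 → w' 1 = 0 →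
      (∫ x in (0:ℝ)..1,
        (Ufun γ δ (w x) τ * (a₁ - b₁ * Ufun γ δ (w x) τ) - c₁ * τ)) = 0 →
      ∀ x ∈ Icc (0:ℝ) 1, ∀ y ∈ Icc (0:ℝ) 1, w x = w y := by
  set T := a₁^2/(4*b₁*c₁) with hTdef
  have hTpos : 0 < T := by rw [hTdef]; positivity
  set B := γ*T*b₂ + γ*c₂*T^2 with hBdef
  set K := 1 + a₁/b₁ + Real.sqrt (B/b₁) with hKdef
  have hKpos : 0 < K := by
    have := Real.sqrt_nonneg (B/b₁)
    have : 0 < a₁/b₁ := by positivity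
    rw [hKdef]
    positivity
  set C₀ := b₁*K^2 + c₁*T with hCdef
  set V := a₂/c₂ + Real.sqrt (C₀/(γ*c₂)) with hVdef
  have hVpos : 0 < V := by
    have := Real.sqrt_nonneg (C₀/(γ*c₂))
    have : 0 < a₂/c₂ := by positivity
    rw [hVdef]
    positivity
  set L := a₁/δ + 2*b₁*K/δ + a₂ + 2*c₂*V with hLdef
  have hLpos : 0 < L := by rw [hLdef]; positivity
  refine ⟨L, hLpos, ?_⟩
  intro d hd τ w w' w'' hτ hw hw' hw''c heqn hb0 hb1 hintc x hx y hy
  have hdpos : 0 < d := lt_trans hLpos hd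
  have hwc : ContinuousOn w (Icc 0 1) := fun z hz => (hw z hz).continuousWithinAt
  have hw'c : ContinuousOn w' (Icc 0 1) := fun z hz => (hw' z hz).continuousWithinAt
  have hII : ∀ {f : ℝ → ℝ}, ContinuousOn f (Icc 0 1) →
      IntervalIntegrable f MeasureTheory.volume 0 1 := by
    intro f hf
    apply ContinuousOn.intervalIntegrable
    rwa [uIcc_of_le zero_le_one]
  have hupos : ∀ z : ℝ, 0 < Ufun γ δ (w z) τ := fun z => Ufun_pos hγ hδ hτ
  have huid : ∀ z : ℝ, δ * (Ufun γ δ (w z) τ)^2 = (w z) * Ufun γ δ (w z) τ + γ * τ :=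
    fun z => Ufun_id hγ hδ hτ
  have hUc : ContinuousOn (fun z => Ufun γ δ (w z) τ) (Icc 0 1) := by
    have : ContinuousOn (fun z => (Real.sqrt ((w z)^2 + 4*γ*δ*τ) + w z) / (2*δ))
        (Icc 0 1) :=
      ((Real.continuous_sqrt.comp_continuousOn
        ((hwc.pow 2).add continuousOn_const)).add hwc).div_const _
    simpa [Ufun] using this
  -- τ ≤ T
  have hτT : τ ≤ T := by
    have hptw : ∀ z ∈ Icc (0:ℝ) 1,
        Ufun γ δ (w z) τ * (a₁ - b₁ * Ufun γ δ (w z) τ) - c₁*τ ≤ a₁^2/(4*b₁) - c₁*τ := by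
      intro z hz
      have hu := hupos z
      rw [sub_le_sub_iff_right, ← sub_nonneg]
      have e : a₁^2/(4*b₁) - Ufun γ δ (w z) τ * (a₁ - b₁ * Ufun γ δ (w z) τ)
          = (a₁ - 2*b₁*Ufun γ δ (w z) τ)^2 / (4*b₁) := by
        field_simp
        ring
      rw [e]
      positivity
    have hgi : IntervalIntegrable
        (fun z => Ufun γ δ (w z) τ * (a₁ - b₁ * Ufun γ δ (w z) τ) - c₁*τ)
        MeasureTheory.volume 0 1 :=
      hII ((hUc.mul (continuousOn_const.sub (continuousOn_const.mul hUc))).sub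
        continuousOn_const)
    have hm := intervalIntegral.integral_mono_on zero_le_one hgi
      intervalIntegrable_const hptw
    rw [hintc, intervalIntegral.integral_const] at hm
    simp only [sub_zero, one_smul, smul_eq_mul] at hm
    have e : T = (a₁^2/(4*b₁))/c₁ := by rw [hTdef, ← div_div]
    rw [e, le_div_iff₀ hc₁]
    linarith
  -- extremum points
  obtain ⟨xM, hxM, hmaxOn⟩ := isCompact_Icc.exists_isMaxOn
    (nonempty_Icc.2 zero_le_one) hwc
  obtain ⟨xm, hxm, hminOn⟩ := isCompact_Icc.exists_isMinOn
    (nonempty_Icc.2 zero_le_one) hwc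
  have hmax' : ∀ z ∈ Icc (0:ℝ) 1, w z ≤ w xM := fun z hz => hmaxOn hz
  have hmin' : ∀ z ∈ Icc (0:ℝ) 1, w xm ≤ w z := fun z hz => hminOn hz
  -- second derivative signs at the extrema
  have hm2 : 0 ≤ w'' xm := min_snd_deriv hw hw' hw''c hb0 hb1 hxm hmin'
  have hM2 : w'' xM ≤ 0 := by
    have := min_snd_deriv (w := fun z => -w z) (w' := fun z => -w' z)
      (w'' := fun z => -w'' z)
      (fun z hz => (hw z hz).neg) (fun z hz => (hw' z hz).neg) hw''c.neg
      (by simp [hb0]) (by simp [hb1]) hxM (fun z hz => neg_le_neg (hmax' z hz))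
    have h9 : 0 ≤ -w'' xM := this
    linarith
  -- sign of h at the extrema
  have hHM : 0 ≤ hfun a₁ a₂ b₁ b₂ c₁ c₂ γ (Ufun γ δ (w xM) τ) τ := by
    have h1 := heqn xM hxM
    have h2 : 0 ≤ d * (-(w'' xM)) := mul_nonneg hdpos.le (neg_nonneg.2 hM2)
    have h3 : d * (-(w'' xM)) = -(d * w'' xM) := by ring
    linarith [h2, h3]
  have hHm : hfun a₁ a₂ b₁ b₂ c₁ c₂ γ (Ufun γ δ (w xm) τ) τ ≤ 0 := by
    have h1 := heqn xm hxm
    have h2 : 0 ≤ d * w'' xm := mul_nonneg hdpos.le hm2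
    linarith [h2]
  -- upper bound on u
  have hKM : Ufun γ δ (w xM) τ ≤ K := by
    have := umax_bound a₁ a₂ b₁ b₂ c₁ c₂ γ T (Ufun γ δ (w xM) τ) τ
      ha₁ ha₂ hb₁ hb₂ hc₁ hc₂ hγ hτ (hupos xM) hτT hTpos hHM
    rw [hKdef, hBdef]
    exact this
  have huK : ∀ z ∈ Icc (0:ℝ) 1, Ufun γ δ (w z) τ ≤ K := fun z hz =>
    le_trans (u_mono hγ hδ hτ (hupos z) (hupos xM) (huid z) (huid xM)
      (hmax' z hz)) hKM
  -- lower bound: τ ≤ V * u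
  have hVm : τ ≤ V * Ufun γ δ (w xm) τ := by
    have := vmax_bound a₁ a₂ b₁ b₂ c₁ c₂ γ T K (Ufun γ δ (w xm) τ) τ
      ha₁ ha₂ hb₁ hb₂ hc₁ hc₂ hγ hτ (hupos xm) hτT hTpos (huK xm hxm) hKpos hHm
    rw [hVdef, hCdef]
    linarith [this]
  have hVz : ∀ z ∈ Icc (0:ℝ) 1, τ ≤ V * Ufun γ δ (w z) τ := fun z hz =>
    le_trans hVm (mul_le_mul_of_nonneg_left
      (u_mono hγ hδ hτ (hupos xm) (hupos z) (huid xm) (huid z) (hmin' z hz))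
      hVpos.le)
  -- the mean value of w
  set wbar := ∫ t in (0:ℝ)..1, w t with hwbar
  have hwbar_le : wbar ≤ w xM := by
    have hm := intervalIntegral.integral_mono_on zero_le_one (hII hwc)
      intervalIntegrable_const hmax'
    rw [intervalIntegral.integral_const] at hm
    simpa using hm
  have hwbar_ge : w xm ≤ wbar := by
    have hm := intervalIntegral.integral_mono_on zero_le_one
      intervalIntegrable_const (hII hwc) hmin'
    rw [intervalIntegral.integral_const] at hm
    simpa using hm
  have hubar_pos : 0 < Ufun γ δ wbar τ := Ufun_pos hγ hδ hτ
  have hubar_id : δ * (Ufun γ δ wbar τ)^2 = wbar * Ufun γ δ wbar τ + γ * τ :=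
    Ufun_id hγ hδ hτ
  have hubarK : Ufun γ δ wbar τ ≤ K :=
    le_trans (u_mono hγ hδ hτ hubar_pos (hupos xM) hubar_id (huid xM) hwbar_le) hKM
  have hubarV : τ ≤ V * Ufun γ δ wbar τ :=
    le_trans hVm (mul_le_mul_of_nonneg_left
      (u_mono hγ hδ hτ (hupos xm) hubar_pos (huid xm) hubar_id hwbar_ge) hVpos.le)
  -- FTC helper
  have hFTC : ∀ (f f' : ℝ → ℝ),
      (∀ z ∈ Icc (0:ℝ) 1, HasDerivWithinAt f (f' z) (Icc 0 1) z) →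
      ContinuousOn f' (Icc 0 1) → (∫ z in (0:ℝ)..1, f' z) = f 1 - f 0 := by
    intro f f' hder hc'
    refine intervalIntegral.integral_eq_sub_of_hasDeriv_right_of_le zero_le_one
      (fun z hz => (hder z hz).continuousWithinAt) (fun z hz => ?_) (hII hc')
    exact ((hder z ⟨hz.1.le, hz.2.le⟩).hasDerivAt
      (Icc_mem_nhds hz.1 hz.2)).hasDerivWithinAt
  -- integration by parts
  set I := ∫ z in (0:ℝ)..1, w' z * w' z with hIdef
  have hIc : ContinuousOn (fun z => w' z * w' z) (Icc (0:ℝ) 1) := hw'c.mul hw'c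
  have hJc : ContinuousOn (fun z => w'' z * (w z - wbar)) (Icc (0:ℝ) 1) :=
    hw''c.mul (hwc.sub continuousOn_const)
  have hparts : (∫ z in (0:ℝ)..1, (w'' z * (w z - wbar) + w' z * w' z)) = 0 := by
    have e := hFTC (fun z => w' z * (w z - wbar))
      (fun z => w'' z * (w z - wbar) + w' z * w' z)
      (fun z hz => ((hw' z hz).mul ((hw z hz).sub_const wbar)))
      (hJc.add hIc)
    rw [e]
    simp [hb0, hb1]
  have hsplit : (∫ z in (0:ℝ)..1, w'' z * (w z - wbar)) = -I := by
    rw [intervalIntegral.integral_add (hII hJc) (hII hIc)] at hparts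
    rw [hIdef]
    linarith
  -- energy identity
  set Hbar := hfun a₁ a₂ b₁ b₂ c₁ c₂ γ (Ufun γ δ wbar τ) τ with hHbardef
  have hzero : (∫ z in (0:ℝ)..1, (w z - wbar)) = 0 := by
    rw [intervalIntegral.integral_sub (hII hwc) intervalIntegrable_const,
      intervalIntegral.integral_const]
    simp [hwbar]
  have henergy : (∫ z in (0:ℝ)..1, (-d * w'' z - Hbar) * (w z - wbar)) = d * I := by
    have e : (fun z => (-d * w'' z - Hbar) * (w z - wbar))
        = fun z => (-d) * (w'' z * (w z - wbar)) - Hbar * (w z - wbar) := by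
      funext z; ring
    rw [e, intervalIntegral.integral_sub (by
        simpa using (hII hJc).const_mul (-d))
      (by simpa using (hII (hwc.sub continuousOn_const)).const_mul Hbar),
      intervalIntegral.integral_const_mul, intervalIntegral.integral_const_mul,
      hsplit, hzero]
    ring
  -- pointwise Lipschitz bound
  have hptL : ∀ z ∈ Icc (0:ℝ) 1,
      (-d * w'' z - Hbar) * (w z - wbar) ≤ L * (w z - wbar)^2 := by
    intro z hz
    have heqz : -d * w'' z = hfun a₁ a₂ b₁ b₂ c₁ c₂ γ (Ufun γ δ (w z) τ) τ := by
      have := heqn z hz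
      linarith
    have hlip := hfun_lip a₁ a₂ b₁ b₂ c₁ c₂ γ δ τ K V
      (Ufun γ δ (w z) τ) (Ufun γ δ wbar τ) (w z) wbar
      ha₁ ha₂ hb₁ hc₂ hγ hδ hτ (hupos z) hubar_pos (huK z hz) hubarK
      (hVz z hz) hubarV (huid z) hubar_id
    rw [heqz]
    calc (hfun a₁ a₂ b₁ b₂ c₁ c₂ γ (Ufun γ δ (w z) τ) τ - Hbar) * (w z - wbar)
        ≤ |(hfun a₁ a₂ b₁ b₂ c₁ c₂ γ (Ufun γ δ (w z) τ) τ - Hbar) * (w z - wbar)| :=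
          le_abs_self _
      _ = |hfun a₁ a₂ b₁ b₂ c₁ c₂ γ (Ufun γ δ (w z) τ) τ - Hbar| * |w z - wbar| :=
          abs_mul _ _
      _ ≤ (L * |w z - wbar|) * |w z - wbar| := by
          apply mul_le_mul_of_nonneg_right _ (abs_nonneg _)
          rw [hHbardef, hLdef]
          exact hlip
      _ = L * (w z - wbar)^2 := by rw [mul_assoc, ← sq_abs]; ring
  -- oscillation bound
  set A := ∫ t in (0:ℝ)..1, |w' t| with hAdef
  have hAnn : 0 ≤ A :=
    intervalIntegral.integral_nonneg zero_le_one (fun t _ => abs_nonneg _)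
  have hosc : ∀ s ∈ Icc (0:ℝ) 1, ∀ t ∈ Icc (0:ℝ) 1, |w t - w s| ≤ A := by
    have main : ∀ s t : ℝ, s ∈ Icc (0:ℝ) 1 → t ∈ Icc (0:ℝ) 1 → s ≤ t →
        |w t - w s| ≤ A := by
      intro s t hs ht hst
      have hftc : (∫ z in s..t, w' z) = w t - w s := by
        refine intervalIntegral.integral_eq_sub_of_hasDeriv_right_of_le hst
          (hwc.mono (Icc_subset_Icc hs.1 ht.2)) (fun z hz => ?_)
          ((hII hw'c).mono_set ?_)
        · have hzI : z ∈ Icc (0:ℝ) 1 := ⟨le_trans hs.1 hz.1.le, le_trans hz.2.le ht.2⟩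
          exact ((hw z hzI).hasDerivAt (Icc_mem_nhds
            (lt_of_le_of_lt hs.1 hz.1) (lt_of_lt_of_le hz.2 ht.2))).hasDerivWithinAt
        · rw [uIcc_of_le hst, uIcc_of_le zero_le_one]
          exact Icc_subset_Icc hs.1 ht.2
      rw [← hftc]
      calc |∫ z in s..t, w' z| ≤ ∫ z in s..t, |w' z| :=
            intervalIntegral.abs_integral_le_integral_abs hst
        _ ≤ A := by
            rw [hAdef]
            exact intervalIntegral.integral_mono_interval hs.1 hst ht.2
              (Filter.Eventually.of_forall (fun t => abs_nonneg _)) (hII hw'c.abs)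
    intro s hs t ht
    rcases le_total s t with h | h
    · exact main s t hs ht h
    · rw [abs_sub_comm]
      exact main t s ht hs h
  have hbarosc : ∀ z ∈ Icc (0:ℝ) 1, |w z - wbar| ≤ A := by
    intro z hz
    rw [abs_le]
    constructor
    · have hpt : ∀ t ∈ Icc (0:ℝ) 1, w t ≤ w z + A := by
        intro t ht
        have := abs_le.1 (hosc z hz t ht)
        linarith [this.2]
      have hm := intervalIntegral.integral_mono_on zero_le_one (hII hwc)
        intervalIntegrable_const hpt
      rw [intervalIntegral.integral_const] at hm
      simp only [sub_zero, one_smul, smul_eq_mul] at hm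
      rw [← hwbar] at hm
      linarith
    · have hpt : ∀ t ∈ Icc (0:ℝ) 1, w z - A ≤ w t := by
        intro t ht
        have := abs_le.1 (hosc z hz t ht)
        linarith [this.1]
      have hm := intervalIntegral.integral_mono_on zero_le_one
        intervalIntegrable_const (hII hwc) hpt
      rw [intervalIntegral.integral_const] at hm
      simp only [sub_zero, one_smul, smul_eq_mul] at hm
      rw [← hwbar] at hm
      linarith
  -- ∫ L (w - wbar)² ≤ L A²
  have hsqc : ContinuousOn (fun z => L * (w z - wbar)^2) (Icc (0:ℝ) 1) :=
    continuousOn_const.mul ((hwc.sub continuousOn_const).pow 2)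
  have hLA : (∫ z in (0:ℝ)..1, L * (w z - wbar)^2) ≤ L * A^2 := by
    have hpt : ∀ z ∈ Icc (0:ℝ) 1, L * (w z - wbar)^2 ≤ L * A^2 := by
      intro z hz
      have h1 := hbarosc z hz
      have h2 : (w z - wbar)^2 ≤ A^2 := by
        rw [← sq_abs]
        exact pow_le_pow_left₀ (abs_nonneg _) h1 2
      exact mul_le_mul_of_nonneg_left h2 hLpos.le
    have hm := intervalIntegral.integral_mono_on zero_le_one (hII hsqc)
      intervalIntegrable_const hpt
    rw [intervalIntegral.integral_const] at hm
    simpa using hm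
  -- A² ≤ I
  have hA2I : A^2 ≤ I := by
    have hexp : ∀ z : ℝ, (|w' z| - A)^2 = w' z * w' z - (2*A)*|w' z| + A^2 := by
      intro z
      rw [sub_sq, sq_abs]
      ring
    have hnn : 0 ≤ ∫ z in (0:ℝ)..1, (|w' z| - A)^2 :=
      intervalIntegral.integral_nonneg zero_le_one (fun _ _ => sq_nonneg _)
    have hcalc : (∫ z in (0:ℝ)..1, (|w' z| - A)^2) = I - 2*A*A + A^2 := by
      have e : (fun z => (|w' z| - A)^2)
          = fun z => (w' z * w' z - (2*A)*|w' z|) + A^2 := by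
        funext z
        rw [hexp z]
      rw [e, intervalIntegral.integral_add
        (((hII hIc)).sub (by simpa using (hII hw'c.abs).const_mul (2*A)))
        intervalIntegrable_const,
        intervalIntegral.integral_sub (hII hIc)
        (by simpa using (hII hw'c.abs).const_mul (2*A)),
        intervalIntegral.integral_const_mul, intervalIntegral.integral_const]
      rw [← hAdef, ← hIdef]
      simp
      try ring
    linarith
  -- conclusion
  have hchain : d * I ≤ L * I := by
    calc d * I = ∫ z in (0:ℝ)..1, (-d * w'' z - Hbar) * (w z - wbar) := henergy.symm
      _ ≤ ∫ z in (0:ℝ)..1, L * (w z - wbar)^2 := by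
          apply intervalIntegral.integral_mono_on zero_le_one _ (hII hsqc) hptL
          exact hII (((hw''c.const_smul (-d)).sub continuousOn_const).mul
            (hwc.sub continuousOn_const))
      _ ≤ L * A^2 := hLA
      _ ≤ L * I := mul_le_mul_of_nonneg_left hA2I hLpos.le
  have hInn : 0 ≤ I :=
    intervalIntegral.integral_nonneg zero_le_one (fun z _ => mul_self_nonneg _)
  have hIle : I ≤ 0 := by
    by_contra hcon
    push_neg at hcon
    have h5 : 0 < (d - L) * I := mul_pos (sub_pos.2 hd) hcon
    have h6 : (d - L) * I = d * I - L * I := by ring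
    linarith [hchain]
  have hI0 : I = 0 := le_antisymm hIle hInn
  have hA2 : A^2 = 0 := le_antisymm (hI0 ▸ hA2I) (sq_nonneg A)
  have hA0 : A = 0 := pow_eq_zero_iff two_ne_zero |>.1 hA2
  have hx' := hbarosc x hx
  have hy' := hbarosc y hy
  rw [hA0] at hx' hy'
  have h1 := abs_le.1 hx'
  have h2 := abs_le.1 hy'
  linarith [h1.1, h1.2, h2.1, h2.2]
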